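/- (Henstock's Lemma / Saks–Henstock) Let f be Henstock–Kurzweil integrable on a brick I with indefinite integral F(J) = ∫_J f dμ. Given ε > 0, let δ be a gauge on I such that every δ-compatible tagged division 𝒟 of I satisfies |∑ f(P)μ(J) − F(I)| < ε. Then for every sub-collection (partial division) of such a 𝒟, |∑ (f(Pⱼ)μ(Jⱼ) − F(Jⱼ))| ≤ ε, and moreover ∑_{(J,P)∈𝒟} |f(P)μ(J) − F(J)| ≤ 4ε. -/

import Mathlib

open Set Filter

/-- A brick (compact non-degenerate interval) in `ι → ℝ`. -/
structure Brick (ι : Type*) [Fintype ι] where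
  lower : ι → ℝ
  upper : ι → ℝ
  lt : ∀ j, lower j < upper j

variable {ι : Type*} [Fintype ι]

namespace Brick

/-- The underlying closed set of a brick. -/
def toSet (I : Brick ι) : Set (ι → ℝ) := {x | ∀ j, x j ∈ Set.Icc (I.lower j) (I.upper j)}

/-- The open interior of a brick. -/
def inter (I : Brick ι) : Set (ι → ℝ) := {x | ∀ j, x j ∈ Set.Ioo (I.lower j) (I.upper j)}

/-- The volume of a brick. -/
noncomputable def vol (I : Brick ι) : ℝ := ∏ j, (I.upper j - I.lower j)

end Brick

/-- A tagged division of a brick `I`: finitely many non-overlapping sub-bricks covering `I`,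
each with a tag point belonging to it. -/
structure TaggedDiv {ι : Type*} [Fintype ι] (I : Brick ι) where
  pieces : Finset (Brick ι × (ι → ℝ))
  subset_of_mem : ∀ p ∈ pieces, (p.1 : Brick ι).toSet ⊆ I.toSet
  tag_mem : ∀ p ∈ pieces, p.2 ∈ (p.1 : Brick ι).toSet
  nonoverlap : ∀ p ∈ pieces, ∀ q ∈ pieces, p ≠ q →
    (p.1 : Brick ι).inter ∩ (q.1 : Brick ι).inter = ∅
  cover : I.toSet = ⋃ p ∈ pieces, (p.1 : Brick ι).toSet

/-- A gauge on a brick: a function positive at each point of the brick. -/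
def IsGauge (I : Brick ι) (δ : (ι → ℝ) → ℝ) : Prop := ∀ x ∈ I.toSet, 0 < δ x

/-- A tagged division is compatible with the gauge `δ` if each brick lies in the open ball
of radius `δ` about its tag. -/
def Compat {I : Brick ι} (D : TaggedDiv I) (δ : (ι → ℝ) → ℝ) : Prop :=
  ∀ p ∈ D.pieces, (p.1 : Brick ι).toSet ⊆ Metric.ball p.2 (δ p.2)

/-- The Riemann sum of `f` over a tagged division. -/
noncomputable def riemannSum {I : Brick ι} (f : (ι → ℝ) → ℝ) (D : TaggedDiv I) : ℝ :=
  ∑ p ∈ D.pieces, f p.2 * (p.1 : Brick ι).vol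

/-- `f` has Henstock–Kurzweil integral `A` on the brick `I`. -/
def HasHK (I : Brick ι) (f : (ι → ℝ) → ℝ) (A : ℝ) : Prop :=
  ∀ ε > 0, ∃ δ : (ι → ℝ) → ℝ, IsGauge I δ ∧
    ∀ D : TaggedDiv I, Compat D δ → |riemannSum f D - A| < ε

/-- Complex Riemann sum. -/
noncomputable def riemannSumC {I : Brick ι} (f : (ι → ℝ) → ℂ) (D : TaggedDiv I) : ℂ :=
  ∑ p ∈ D.pieces, f p.2 * ((p.1 : Brick ι).vol : ℂ)

/-- `f` has complex Henstock–Kurzweil integral `A` on the brick `I`. -/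
def HasHKC (I : Brick ι) (f : (ι → ℝ) → ℂ) (A : ℂ) : Prop :=
  ∀ ε > 0, ∃ δ : (ι → ℝ) → ℝ, IsGauge I δ ∧
    ∀ D : TaggedDiv I, Compat D δ → ‖riemannSumC f D - A‖ < ε

/-! ### Auxiliary lemmas -/

namespace Brick

variable {J K : Brick ι}

lemma lower_mem_toSet (J : Brick ι) : J.lower ∈ J.toSet :=
  fun j => ⟨le_refl _, (J.lt j).le⟩

lemma upper_mem_toSet (J : Brick ι) : J.upper ∈ J.toSet :=
  fun j => ⟨(J.lt j).le, le_refl _⟩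

lemma inter_mono (h : J.toSet ⊆ K.toSet) : J.inter ⊆ K.inter := by
  intro x hx j
  have h1 := (h J.lower_mem_toSet j).1
  have h2 := (h J.upper_mem_toSet j).2
  exact ⟨lt_of_le_of_lt h1 (hx j).1, lt_of_lt_of_le (hx j).2 h2⟩

lemma inter_nonempty (J : Brick ι) : J.inter.Nonempty := by
  refine ⟨fun j => (J.lower j + J.upper j) / 2, fun j => ?_⟩
  constructor <;> · have := J.lt j; simp only; linarith

/-- The `BoxIntegral.Box` associated to a brick. -/
def toBox (J : Brick ι) : BoxIntegral.Box ι := ⟨J.lower, J.upper, J.lt⟩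

/-- The brick associated to a `BoxIntegral.Box`. -/
def ofBox (B : BoxIntegral.Box ι) : Brick ι := ⟨B.lower, B.upper, B.lower_lt_upper⟩

lemma toSet_eq_Icc (J : Brick ι) : J.toSet = Set.Icc J.lower J.upper := by
  ext x
  simp only [toSet, Set.mem_setOf_eq, Set.mem_Icc, Pi.le_def, Set.mem_Icc]
  exact ⟨fun h => ⟨fun j => (h j).1, fun j => (h j).2⟩, fun h j => ⟨h.1 j, h.2 j⟩⟩

lemma toSet_toBox (J : Brick ι) : J.toSet = BoxIntegral.Box.Icc J.toBox := by
  rw [toSet_eq_Icc, BoxIntegral.Box.Icc_def]; rfl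

lemma toSet_ofBox (B : BoxIntegral.Box ι) : (ofBox B).toSet = BoxIntegral.Box.Icc B := by
  rw [toSet_eq_Icc, BoxIntegral.Box.Icc_def]; rfl

lemma inter_subset_coe_box (B : BoxIntegral.Box ι) :
    (ofBox B).inter ⊆ (B : Set (ι → ℝ)) := by
  intro x hx
  rw [BoxIntegral.Box.mem_coe, BoxIntegral.Box.mem_def]
  exact fun j => ⟨(hx j).1, (hx j).2.le⟩

end Brick

/-- **Cousin's lemma**: every gauge on a brick admits a compatible tagged division. -/
lemma exists_compat_taggedDiv (J : Brick ι) (g : (ι → ℝ) → ℝ) (hg : IsGauge J g) :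
    ∃ D : TaggedDiv J, Compat D g := by
  classical
  set r : (ι → ℝ) → Set.Ioi (0 : ℝ) := fun x =>
    if h : 0 < g x then ⟨g x / 2, by simpa using half_pos h⟩ else ⟨1, by simp⟩ with hr
  obtain ⟨π, hpart, hhen, hsubord, -, -⟩ :=
    BoxIntegral.Box.exists_taggedPartition_isHenstock_isSubordinate_homothetic J.toBox r
  set pieces : Finset (Brick ι × (ι → ℝ)) :=
    π.boxes.image (fun B => (Brick.ofBox B, π.tag B)) with hpieces
  have hmem : ∀ p ∈ pieces, ∃ B ∈ π.boxes, (Brick.ofBox B, π.tag B) = p := by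
    intro p hp
    simpa using Finset.mem_image.1 hp
  have hboxle : ∀ B ∈ π.boxes, BoxIntegral.Box.Icc B ⊆ BoxIntegral.Box.Icc J.toBox := by
    intro B hB
    exact BoxIntegral.Box.le_iff_Icc.1 (π.toPrepartition.le_of_mem' B hB)
  have hsub : ∀ p ∈ pieces, (p.1 : Brick ι).toSet ⊆ J.toSet := by
    intro p hp
    obtain ⟨B, hB, rfl⟩ := hmem p hp
    rw [Brick.toSet_ofBox, J.toSet_toBox]
    exact hboxle B hB
  have hofBox_inj : ∀ B B' : BoxIntegral.Box ι, Brick.ofBox B = Brick.ofBox B' → B = B' := by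
    intro B B' h
    have h1 : B.lower = B'.lower := congrArg Brick.lower h
    have h2 : B.upper = B'.upper := congrArg Brick.upper h
    cases B; cases B'; simp_all
  refine ⟨⟨pieces, hsub, ?_, ?_, ?_⟩, ?_⟩
  · intro p hp
    obtain ⟨B, hB, rfl⟩ := hmem p hp
    rw [Brick.toSet_ofBox]
    exact hhen B hB
  · intro p hp q hq hne
    obtain ⟨B, hB, rfl⟩ := hmem p hp
    obtain ⟨B', hB', rfl⟩ := hmem q hq
    have hBB' : B ≠ B' := by
      rintro rfl; exact hne rfl
    have hd : Disjoint (B : Set (ι → ℝ)) (B' : Set (ι → ℝ)) :=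
      π.toPrepartition.pairwiseDisjoint hB hB' hBB'
    apply Set.eq_empty_of_subset_empty
    intro x hx
    exact (hd.le_bot ⟨Brick.inter_subset_coe_box B hx.1, Brick.inter_subset_coe_box B' hx.2⟩ : _)
  · apply Set.Subset.antisymm
    · rw [J.toSet_toBox]
      have hclosed : IsClosed (⋃ B ∈ π.boxes, BoxIntegral.Box.Icc B) := by
        apply Set.Finite.isClosed_biUnion π.boxes.finite_toSet
        intro B _
        exact isClosed_Icc
      have hcoe : (J.toBox : Set (ι → ℝ)) ⊆ ⋃ B ∈ π.boxes, BoxIntegral.Box.Icc B := by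
        intro x hx
        have hUn : π.iUnion = ↑J.toBox :=
          (BoxIntegral.TaggedPrepartition.isPartition_iff_iUnion_eq (π := π)).1 hpart
        have hx' : x ∈ π.iUnion := by rw [hUn]; exact hx
        obtain ⟨B, hB, hxB⟩ := π.mem_iUnion.1 hx'
        exact Set.mem_biUnion hB (BoxIntegral.Box.coe_subset_Icc hxB)
      have hIcc : BoxIntegral.Box.Icc J.toBox = closure (J.toBox : Set (ι → ℝ)) := by
        rw [BoxIntegral.Box.coe_eq_pi, closure_pi_set]
        rw [BoxIntegral.Box.Icc_def, ← Set.pi_univ_Icc]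
        refine Set.pi_congr rfl fun i _ => ?_
        exact (closure_Ioc (J.toBox.lower_ne_upper i)).symm
      rw [hIcc]
      intro x hx
      have hx2 : x ∈ ⋃ B ∈ π.boxes, BoxIntegral.Box.Icc B := by
        have := closure_mono hcoe hx
        rwa [hclosed.closure_eq] at this
      obtain ⟨B, hB, hxB⟩ := Set.mem_iUnion₂.1 hx2
      refine Set.mem_iUnion₂.2 ⟨(Brick.ofBox B, π.tag B), Finset.mem_image.2 ⟨B, hB, rfl⟩, ?_⟩
      rw [Brick.toSet_ofBox]
      exact hxB
    · intro x hx
      obtain ⟨s, hs, hxs⟩ := Set.mem_iUnion₂.1 hx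
      exact hsub s hs hxs
  · intro p hp
    obtain ⟨B, hB, rfl⟩ := hmem p hp
    have htag : π.tag B ∈ J.toSet := by
      rw [J.toSet_toBox]
      exact hboxle B hB (hhen B hB)
    have hpos : 0 < g (π.tag B) := hg _ htag
    have hrval : (r (π.tag B) : ℝ) = g (π.tag B) / 2 := by
      rw [hr]; simp [hpos]
    intro x hx
    have hxcb : x ∈ Metric.closedBall (π.tag B) (r (π.tag B)) := by
      apply hsubord B hB
      rw [← Brick.toSet_ofBox]
      exact hx
    have : x ∈ Metric.closedBall (π.tag B) (g (π.tag B) / 2) := by rwa [hrval] at hxcb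
    exact Metric.closedBall_subset_ball (half_lt_self hpos) this

-- The key estimate: completing a partial division by fine divisions of the remaining bricks.
open scoped Classical in
lemma partial_div_estimate (I : Brick ι) (f : (ι → ℝ) → ℂ) (F : Brick ι → ℂ)
    (hF : ∀ J : Brick ι, J.toSet ⊆ I.toSet → HasHKC J f (F J))
    (g : (ι → ℝ) → ℝ) (hg : IsGauge I g) (ε : ℝ)
    (hclose : ∀ D : TaggedDiv I, Compat D g → ‖riemannSumC f D - F I‖ < ε)
    (D : TaggedDiv I) (Q : Finset (Brick ι × (ι → ℝ))) (hQ : Q ⊆ D.pieces)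
    (hQcompat : ∀ p ∈ Q, (p.1 : Brick ι).toSet ⊆ Metric.ball p.2 (g p.2))
    (η : ℝ) (hη : 0 < η) :
    ‖∑ p ∈ Q, f p.2 * ((p.1 : Brick ι).vol : ℂ)
      + ∑ p ∈ D.pieces \ Q, F p.1 - F I‖ < ε + η := by
  classical
  set R := D.pieces \ Q with hR
  have hRD : R ⊆ D.pieces := Finset.sdiff_subset
  set N := R.card with hN
  set ε' := η / (N + 1) with hε'
  have hε'pos : 0 < ε' := by positivity
  -- choose fine tagged divisions of the remaining bricks
  have hchoice : ∀ p : {p // p ∈ R}, ∃ Dp : TaggedDiv (p.1.1 : Brick ι),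
      Compat Dp g ∧ ‖riemannSumC f Dp - F p.1.1‖ < ε' := by
    rintro ⟨p, hp⟩
    have hpI : (p.1 : Brick ι).toSet ⊆ I.toSet := D.subset_of_mem p (hRD hp)
    obtain ⟨δp, hδp, hδpspec⟩ := hF p.1 hpI ε' hε'pos
    have hg' : IsGauge p.1 (fun x => min (g x) (δp x)) := fun x hx =>
      lt_min (hg x (hpI hx)) (hδp x hx)
    obtain ⟨Dp, hDp⟩ := exists_compat_taggedDiv p.1 _ hg'
    refine ⟨Dp, ?_, hδpspec Dp ?_⟩
    · intro q hq
      exact (hDp q hq).trans (Metric.ball_subset_ball (min_le_left _ _))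
    · intro q hq
      exact (hDp q hq).trans (Metric.ball_subset_ball (min_le_right _ _))
  choose T hTg hTest using hchoice
  -- basic facts about the chosen refinements
  have fact1 : ∀ (p : {p // p ∈ R}) q, q ∈ (T p).pieces →
      (q.1 : Brick ι).toSet ⊆ (p.1.1 : Brick ι).toSet := fun p q hq => (T p).subset_of_mem q hq
  have fact2 : ∀ (p : {p // p ∈ R}) q, q ∈ (T p).pieces →
      (q.1 : Brick ι).inter ⊆ (p.1.1 : Brick ι).inter := fun p q hq =>
    Brick.inter_mono (fact1 p q hq)
  -- the combined collection of pieces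
  set pieces' : Finset (Brick ι × (ι → ℝ)) :=
    Q ∪ R.attach.biUnion (fun p => (T p).pieces) with hpieces'
  have hdisjQB : Disjoint Q (R.attach.biUnion (fun p => (T p).pieces)) := by
    refine Finset.disjoint_left.mpr fun {a} haQ haB => ?_
    obtain ⟨p, -, hap⟩ := Finset.mem_biUnion.1 haB
    have hne : a ≠ p.1 := by
      rintro rfl
      exact (Finset.mem_sdiff.1 p.2).2 haQ
    have hek := D.nonoverlap a (hQ haQ) p.1 (hRD p.2) hne
    obtain ⟨x, hx⟩ := (a.1 : Brick ι).inter_nonempty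
    have : x ∈ (a.1 : Brick ι).inter ∩ (p.1.1 : Brick ι).inter :=
      ⟨hx, fact2 p a hap hx⟩
    rw [hek] at this
    exact this
  have hdisjBB : (R.attach : Set {p // p ∈ R}).PairwiseDisjoint (fun p => (T p).pieces) := by
    intro p _ q _ hne
    refine Finset.disjoint_left.mpr fun {a} hap haq => ?_
    have hne' : p.1 ≠ q.1 := fun h => hne (Subtype.ext h)
    have hek := D.nonoverlap p.1 (hRD p.2) q.1 (hRD q.2) hne'
    obtain ⟨x, hx⟩ := (a.1 : Brick ι).inter_nonempty
    have : x ∈ (p.1.1 : Brick ι).inter ∩ (q.1.1 : Brick ι).inter :=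
      ⟨fact2 p a hap hx, fact2 q a haq hx⟩
    rw [hek] at this
    exact this
  -- membership in pieces' decomposes
  have hmem' : ∀ a ∈ pieces', a ∈ Q ∨ ∃ p : {p // p ∈ R}, a ∈ (T p).pieces := by
    intro a ha
    rcases Finset.mem_union.1 ha with h | h
    · exact Or.inl h
    · obtain ⟨p, -, hp⟩ := Finset.mem_biUnion.1 h
      exact Or.inr ⟨p, hp⟩
  have hsub' : ∀ a ∈ pieces', (a.1 : Brick ι).toSet ⊆ I.toSet := by
    intro a ha
    rcases hmem' a ha with h | ⟨p, hp⟩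
    · exact D.subset_of_mem a (hQ h)
    · exact (fact1 p a hp).trans (D.subset_of_mem p.1 (hRD p.2))
  -- the combined tagged division
  have hcover' : I.toSet = ⋃ a ∈ pieces', (a.1 : Brick ι).toSet := by
    apply Set.Subset.antisymm
    · intro x hx
      rw [D.cover] at hx
      obtain ⟨b, hbD, hxb⟩ := Set.mem_iUnion₂.1 hx
      by_cases hbQ : b ∈ Q
      · exact Set.mem_iUnion₂.2 ⟨b, Finset.mem_union_left _ hbQ, hxb⟩
      · have hbR : b ∈ R := Finset.mem_sdiff.2 ⟨hbD, hbQ⟩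
        rw [(T ⟨b, hbR⟩).cover] at hxb
        obtain ⟨q, hqT, hxq⟩ := Set.mem_iUnion₂.1 hxb
        exact Set.mem_iUnion₂.2 ⟨q, Finset.mem_union_right _
          (Finset.mem_biUnion.2 ⟨⟨b, hbR⟩, Finset.mem_attach _ _, hqT⟩), hxq⟩
    · intro x hx
      obtain ⟨a, ha, hxa⟩ := Set.mem_iUnion₂.1 hx
      exact hsub' a ha hxa
  set D' : TaggedDiv I :=
    { pieces := pieces'
      subset_of_mem := hsub'
      tag_mem := by
        intro a ha
        rcases hmem' a ha with h | ⟨p, hp⟩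
        · exact D.tag_mem a (hQ h)
        · exact (T p).tag_mem a hp
      nonoverlap := by
        intro a ha b hb hne
        rcases Finset.mem_union.1 ha with haQ | haB
        · rcases Finset.mem_union.1 hb with hbQ | hbB
          · exact D.nonoverlap a (hQ haQ) b (hQ hbQ) hne
          · obtain ⟨p, -, hbp⟩ := Finset.mem_biUnion.1 hbB
            have hne' : a ≠ p.1 := by
              rintro rfl
              exact (Finset.mem_sdiff.1 p.2).2 haQ
            have hek := D.nonoverlap a (hQ haQ) p.1 (hRD p.2) hne'
            apply Set.eq_empty_of_subset_empty
            intro x hx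
            rw [← hek]
            exact ⟨hx.1, fact2 p b hbp hx.2⟩
        · obtain ⟨p, -, hap⟩ := Finset.mem_biUnion.1 haB
          rcases Finset.mem_union.1 hb with hbQ | hbB
          · have hne' : p.1 ≠ b := by
              rintro rfl
              exact (Finset.mem_sdiff.1 p.2).2 hbQ
            have hek := D.nonoverlap p.1 (hRD p.2) b (hQ hbQ) hne'
            apply Set.eq_empty_of_subset_empty
            intro x hx
            rw [← hek]
            exact ⟨fact2 p a hap hx.1, hx.2⟩
          · obtain ⟨q, -, hbq⟩ := Finset.mem_biUnion.1 hbB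
            by_cases hpq : p = q
            · subst hpq
              exact (T p).nonoverlap a hap b hbq hne
            · have hne' : p.1 ≠ q.1 := fun h => hpq (Subtype.ext h)
              have hek := D.nonoverlap p.1 (hRD p.2) q.1 (hRD q.2) hne'
              apply Set.eq_empty_of_subset_empty
              intro x hx
              rw [← hek]
              exact ⟨fact2 p a hap hx.1, fact2 q b hbq hx.2⟩
      cover := hcover' } with hD'
  have hD'compat : Compat D' g := by
    intro a ha
    rcases Finset.mem_union.1 ha with h | h
    · exact hQcompat a h
    · obtain ⟨p, -, hp⟩ := Finset.mem_biUnion.1 h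
      exact hTg p a hp
  have hmain := hclose D' hD'compat
  -- compute the Riemann sum of `D'`
  have hsum : riemannSumC f D' = (∑ p ∈ Q, f p.2 * ((p.1 : Brick ι).vol : ℂ))
      + ∑ p ∈ R.attach, riemannSumC f (T p) := by
    show ∑ a ∈ pieces', f a.2 * ((a.1 : Brick ι).vol : ℂ) = _
    rw [hpieces', Finset.sum_union hdisjQB, Finset.sum_biUnion hdisjBB]
    rfl
  have hattach : ∑ p ∈ R, F p.1 = ∑ p ∈ R.attach, F p.1.1 := (Finset.sum_attach _ _).symm
  have hsplit : (∑ p ∈ Q, f p.2 * ((p.1 : Brick ι).vol : ℂ)) + ∑ p ∈ R, F p.1 - F I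
      = (riemannSumC f D' - F I)
        + ∑ p ∈ R.attach, (F p.1.1 - riemannSumC f (T p)) := by
    rw [hattach, hsum, Finset.sum_sub_distrib]
    ring
  have step1 : ‖(∑ p ∈ Q, f p.2 * ((p.1 : Brick ι).vol : ℂ)) + ∑ p ∈ R, F p.1 - F I‖
      ≤ ‖riemannSumC f D' - F I‖
        + ∑ p ∈ R.attach, ‖F p.1.1 - riemannSumC f (T p)‖ := by
    rw [hsplit]
    exact (norm_add_le _ _).trans (add_le_add le_rfl (norm_sum_le _ _))
  have step2 : ∑ p ∈ R.attach, ‖F p.1.1 - riemannSumC f (T p)‖ ≤ η := by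
    have hbound : ∀ p ∈ R.attach, ‖F p.1.1 - riemannSumC f (T p)‖ ≤ ε' := by
      intro p _
      rw [norm_sub_rev]
      exact (hTest p).le
    have h1 : ∑ p ∈ R.attach, ‖F p.1.1 - riemannSumC f (T p)‖
        ≤ R.attach.card • ε' := Finset.sum_le_card_nsmul _ _ _ hbound
    have h2 : (R.attach.card • ε' : ℝ) = (N : ℝ) * ε' := by
      rw [Finset.card_attach, nsmul_eq_mul]
    have hN0 : (0 : ℝ) ≤ (N : ℝ) := Nat.cast_nonneg N
    have hN1 : (0 : ℝ) < (N : ℝ) + 1 := by linarith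
    have h3 : (N : ℝ) * ε' ≤ η := by
      rw [hε']
      rw [← mul_div_assoc]
      rw [div_le_iff₀ hN1]
      nlinarith [hη.le]
    linarith
  have := add_lt_add_of_lt_of_le hmain step2
  linarith [step1, this]

/-- **Henstock's lemma (Saks–Henstock).** If `f` is HK-integrable with indefinite integral `F`
and `δ` is a gauge making all Riemann sums over `I` `ε`-close to `F I`, then every partial
division satisfies `|∑ (f(P)μ(J) − F(J))| ≤ ε`, and the full division satisfies
`∑ |f(P)μ(J) − F(J)| ≤ 4ε`. -/
theorem henstock_lemma (I : Brick ι) (f : (ι → ℝ) → ℂ) (F : Brick ι → ℂ)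
    (hF : ∀ J : Brick ι, J.toSet ⊆ I.toSet → HasHKC J f (F J))
    (ε : ℝ) (hε : 0 < ε) (δ : (ι → ℝ) → ℝ) (hδ : IsGauge I δ)
    (hclose : ∀ D : TaggedDiv I, Compat D δ → ‖riemannSumC f D - F I‖ < ε) :
    ∀ D : TaggedDiv I, Compat D δ →
      (∀ Q ⊆ D.pieces,
        ‖∑ p ∈ Q, (f p.2 * ((p.1 : Brick ι).vol : ℂ) - F p.1)‖ ≤ ε) ∧
      ∑ p ∈ D.pieces, ‖f p.2 * ((p.1 : Brick ι).vol : ℂ) - F p.1‖ ≤ 4 * ε := by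
  classical
  intro D hD
  -- Step 1: additivity of `F` over the division `D`.
  have hadd : ∑ p ∈ D.pieces, F p.1 = F I := by
    have key : ∀ ε'' > (0 : ℝ), ‖∑ p ∈ D.pieces, F p.1 - F I‖ < ε'' := by
      intro ε'' hε''
      obtain ⟨δ₀, hδ₀, hspec⟩ := hF I subset_rfl (ε'' / 2) (half_pos hε'')
      have h := partial_div_estimate I f F hF δ₀ hδ₀ (ε'' / 2) hspec D ∅
        (Finset.empty_subset _) (by intro p hp; exact absurd hp (Finset.notMem_empty p))
        (ε'' / 2) (half_pos hε'')
      rw [Finset.sum_empty, zero_add, Finset.sdiff_empty] at h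
      linarith [h]
    by_contra hne
    have h0 : 0 < ‖∑ p ∈ D.pieces, F p.1 - F I‖ := by
      rw [norm_pos_iff]
      exact sub_ne_zero.2 hne
    exact lt_irrefl _ (key _ h0)
  -- Step 2: the partial-division estimate.
  have part1 : ∀ Q ⊆ D.pieces,
      ‖∑ p ∈ Q, (f p.2 * ((p.1 : Brick ι).vol : ℂ) - F p.1)‖ ≤ ε := by
    intro Q hQ
    apply le_of_forall_pos_lt_add
    intro η hη
    have h := partial_div_estimate I f F hF δ hδ ε hclose D Q hQ
      (fun p hp => hD p (hQ hp)) η hη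
    have hrw : ∑ p ∈ Q, (f p.2 * ((p.1 : Brick ι).vol : ℂ) - F p.1)
        = (∑ p ∈ Q, f p.2 * ((p.1 : Brick ι).vol : ℂ)) + ∑ p ∈ D.pieces \ Q, F p.1 - F I := by
      have h2 : (∑ p ∈ D.pieces \ Q, F p.1) + ∑ p ∈ Q, F p.1 = ∑ p ∈ D.pieces, F p.1 :=
        Finset.sum_sdiff hQ
      rw [Finset.sum_sub_distrib]
      rw [← hadd, ← h2]
      ring
    rw [hrw]
    exact h
  refine ⟨part1, ?_⟩
  -- Step 3: the `4ε` bound, separating real and imaginary parts.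
  have hcomp : ∀ u : ℂ → ℝ,
      (∀ (s : Finset (Brick ι × (ι → ℝ))) (g : (Brick ι × (ι → ℝ)) → ℂ),
        u (∑ p ∈ s, g p) = ∑ p ∈ s, u (g p)) →
      (∀ z : ℂ, |u z| ≤ ‖z‖) →
      ∑ p ∈ D.pieces, |u (f p.2 * ((p.1 : Brick ι).vol : ℂ) - F p.1)| ≤ 2 * ε := by
    intro u husum hu
    set g : (Brick ι × (ι → ℝ)) → ℂ := fun p => f p.2 * ((p.1 : Brick ι).vol : ℂ) - F p.1
      with hg
    have hsplit := Finset.sum_filter_add_sum_filter_not D.pieces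
      (fun p => 0 ≤ u (g p)) (fun p => |u (g p)|)
    have h1 : ∑ p ∈ D.pieces.filter (fun p => 0 ≤ u (g p)), |u (g p)| ≤ ε := by
      have e : ∑ p ∈ D.pieces.filter (fun p => 0 ≤ u (g p)), |u (g p)|
          = u (∑ p ∈ D.pieces.filter (fun p => 0 ≤ u (g p)), g p) := by
        rw [husum]
        exact Finset.sum_congr rfl fun p hp => abs_of_nonneg (Finset.mem_filter.1 hp).2
      rw [e]
      exact le_trans (le_abs_self _) (le_trans (hu _)
        (part1 _ (Finset.filter_subset _ _)))
    have h2 : ∑ p ∈ D.pieces.filter (fun p => ¬ 0 ≤ u (g p)), |u (g p)| ≤ ε := by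
      have e : ∑ p ∈ D.pieces.filter (fun p => ¬ 0 ≤ u (g p)), |u (g p)|
          = -(u (∑ p ∈ D.pieces.filter (fun p => ¬ 0 ≤ u (g p)), g p)) := by
        rw [husum, ← Finset.sum_neg_distrib]
        exact Finset.sum_congr rfl fun p hp =>
          abs_of_nonpos (le_of_lt (lt_of_not_ge (Finset.mem_filter.1 hp).2))
      rw [e]
      exact le_trans (neg_le_abs _) (le_trans (hu _)
        (part1 _ (Finset.filter_subset _ _)))
    linarith
  have hre := hcomp Complex.re (fun s g => Complex.re_sum s g) (fun z => Complex.abs_re_le_norm z)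
  have him := hcomp Complex.im (fun s g => Complex.im_sum s g) (fun z => Complex.abs_im_le_norm z)
  calc ∑ p ∈ D.pieces, ‖f p.2 * ((p.1 : Brick ι).vol : ℂ) - F p.1‖
      ≤ ∑ p ∈ D.pieces, (|(f p.2 * ((p.1 : Brick ι).vol : ℂ) - F p.1).re|
          + |(f p.2 * ((p.1 : Brick ι).vol : ℂ) - F p.1).im|) :=
        Finset.sum_le_sum fun p _ => Complex.norm_le_abs_re_add_abs_im _
    _ = (∑ p ∈ D.pieces, |(f p.2 * ((p.1 : Brick ι).vol : ℂ) - F p.1).re|)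
          + ∑ p ∈ D.pieces, |(f p.2 * ((p.1 : Brick ι).vol : ℂ) - F p.1).im| :=
        Finset.sum_add_distrib
    _ ≤ 2 * ε + 2 * ε := add_le_add hre him
    _ = 4 * ε := by ring
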